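/- Let α, V, μ, γ, β > 0 and let (M*, C*) with M* > 0, C* > 0 satisfy α·V·C*² = μ·M* and γ = β·C* + V·C*·M*. Let M, C : [0,∞) → ℝ be differentiable with M'(t) = α·V·C(t)² − μ·M(t), C'(t) = γ − β·C(t) − V·C(t)·M(t), and M(t) ≥ 0 for all t ≥ 0. Then L(t) := (M(t) − M*)² + 2α·(C(t) − C*)² satisfies L'(t) ≤ −2·min(μ, β)·L(t) for all t ≥ 0, and consequently L(t) ≤ L(0)·e^{−2·min(μ,β)·t} for all t ≥ 0; in particular M(t) → M* and C(t) → C* as t → ∞. -/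

import Mathlib

open Filter

/-- Exponential decay of the Lyapunov function: along solutions of `M' = α V C² − μ M`,
`C' = γ − β C − V C M` with `M ≥ 0`, `L(t) = (M(t) − M*)² + 2α(C(t) − C*)²` satisfies
`L' ≤ −2 min(μ,β) L`, hence `L(t) ≤ L(0) e^{−2 min(μ,β) t}`, and `M(t) → M*`, `C(t) → C*`. -/
theorem stmt10 (α V μ γ β Mstar Cstar : ℝ)
    (hα : 0 < α) (hV : 0 < V) (hμ : 0 < μ) (hγ : 0 < γ) (hβ : 0 < β)
    (hMstar : 0 < Mstar) (hCstar : 0 < Cstar)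
    (heq1 : α * V * Cstar ^ 2 = μ * Mstar)
    (heq2 : γ = β * Cstar + V * Cstar * Mstar)
    (M C : ℝ → ℝ)
    (hM : ∀ t, 0 ≤ t → HasDerivAt M (α * V * C t ^ 2 - μ * M t) t)
    (hC : ∀ t, 0 ≤ t → HasDerivAt C (γ - β * C t - V * C t * M t) t)
    (hMnn : ∀ t, 0 ≤ t → 0 ≤ M t)
    (L : ℝ → ℝ)
    (hL : ∀ t, L t = (M t - Mstar) ^ 2 + 2 * α * (C t - Cstar) ^ 2) :
    (∀ t, 0 ≤ t → deriv L t ≤ -2 * min μ β * L t) ∧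
    (∀ t, 0 ≤ t → L t ≤ L 0 * Real.exp (-2 * min μ β * t)) ∧
    Tendsto M atTop (nhds Mstar) ∧ Tendsto C atTop (nhds Cstar) := by
  have hLfun : L = fun t => (M t - Mstar) ^ 2 + 2 * α * (C t - Cstar) ^ 2 := funext hL
  set k : ℝ := 2 * min μ β with hk
  have hmin : 0 < min μ β := lt_min hμ hβ
  have hk0 : 0 < k := by positivity
  -- derivative of L
  have hLderiv : ∀ t, 0 ≤ t → HasDerivAt L
      (2 * (M t - Mstar) * (α * V * C t ^ 2 - μ * M t)
        + 2 * α * (2 * (C t - Cstar) * (γ - β * C t - V * C t * M t))) t := by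
    intro t ht
    rw [hLfun]
    have h1 : HasDerivAt (fun s => (M s - Mstar) ^ 2)
        (2 * (M t - Mstar) * (α * V * C t ^ 2 - μ * M t)) t := by
      have := (((hM t ht).sub_const Mstar).pow 2)
      exact this.congr_deriv (by simp)
    have h2 : HasDerivAt (fun s => 2 * α * (C s - Cstar) ^ 2)
        (2 * α * (2 * (C t - Cstar) * (γ - β * C t - V * C t * M t))) t := by
      have := ((((hC t ht).sub_const Cstar).pow 2)).const_mul (2 * α)
      exact this.congr_deriv (by simp)
    exact h1.add h2
  -- the key inequality
  have key : ∀ t, 0 ≤ t →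
      2 * (M t - Mstar) * (α * V * C t ^ 2 - μ * M t)
        + 2 * α * (2 * (C t - Cstar) * (γ - β * C t - V * C t * M t))
        ≤ -k * L t := by
    intro t ht
    have hMt := hMnn t ht
    have hE : 2 * (M t - Mstar) * (α * V * C t ^ 2 - μ * M t)
        + 2 * α * (2 * (C t - Cstar) * (γ - β * C t - V * C t * M t))
        = -2 * μ * (M t - Mstar) ^ 2 - 4 * α * β * (C t - Cstar) ^ 2
          - 2 * α * V * (M t + Mstar) * (C t - Cstar) ^ 2 := by
      linear_combination (2 * (M t - Mstar)) * heq1 + (4 * α * (C t - Cstar)) * heq2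
    rw [hE, hL t]
    have h1 : min μ β ≤ μ := min_le_left _ _
    have h2 : min μ β ≤ β := min_le_right _ _
    have s1 : (0:ℝ) ≤ (M t - Mstar) ^ 2 := sq_nonneg _
    have s2 : (0:ℝ) ≤ (C t - Cstar) ^ 2 := sq_nonneg _
    rw [hk]
    nlinarith [mul_nonneg (mul_nonneg hα.le hV.le) (mul_nonneg (by linarith : (0:ℝ) ≤ M t + Mstar) s2),
      mul_le_mul_of_nonneg_right h1 s1, mul_le_mul_of_nonneg_right h2 (mul_nonneg hα.le s2)]
  have hderivL : ∀ t, 0 ≤ t → deriv L t ≤ -k * L t := by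
    intro t ht
    rw [(hLderiv t ht).deriv]
    exact key t ht
  -- Gronwall via monotonicity of g = L * exp(k t)
  have hg : ∀ t, 0 ≤ t → L t ≤ L 0 * Real.exp (-k * t) := by
    intro t ht
    set g : ℝ → ℝ := fun s => L s * Real.exp (k * s) with hgdef
    have hgderiv : ∀ s, 0 ≤ s → HasDerivAt g
        ((2 * (M s - Mstar) * (α * V * C s ^ 2 - μ * M s)
          + 2 * α * (2 * (C s - Cstar) * (γ - β * C s - V * C s * M s))) * Real.exp (k * s)
          + L s * (k * Real.exp (k * s))) s := by
      intro s hs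
      have he : HasDerivAt (fun u => Real.exp (k * u)) (k * Real.exp (k * s)) s := by
        have := (Real.hasDerivAt_exp (k * s)).comp s ((hasDerivAt_id s).const_mul k)
        exact this.congr_deriv (by simp; ring)
      exact (hLderiv s hs).mul he
    have hanti : AntitoneOn g (Set.Ici 0) := by
      apply antitoneOn_of_deriv_nonpos (convex_Ici 0)
      · intro s hs
        exact ((hgderiv s hs).differentiableAt.continuousAt).continuousWithinAt
      · intro s hs
        rw [interior_Ici] at hs
        apply DifferentiableAt.differentiableWithinAt
        exact (hgderiv s (le_of_lt hs)).differentiableAt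
      · intro s hs
        rw [interior_Ici] at hs
        rw [(hgderiv s hs.le).deriv]
        have hkey := key s hs.le
        have hexp : 0 < Real.exp (k * s) := Real.exp_pos _
        nlinarith [mul_le_mul_of_nonneg_right hkey hexp.le]
    have hgt : g t ≤ g 0 := hanti (Set.self_mem_Ici) ht ht
    have hle : L t * Real.exp (k * t) ≤ L 0 := by simpa [hgdef] using hgt
    have hexp : 0 < Real.exp (k * t) := Real.exp_pos _
    rw [neg_mul, Real.exp_neg, ← div_eq_mul_inv, le_div_iff₀ hexp]
    exact hle
  have hLnn : ∀ t, 0 ≤ L t := fun t => by rw [hL]; positivity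
  have h1 : Tendsto (fun t : ℝ => k * t) atTop atTop :=
    tendsto_id.const_mul_atTop hk0
  have h2 : Tendsto (fun t : ℝ => Real.exp (-k * t)) atTop (nhds 0) := by
    have := (Real.tendsto_exp_atTop.comp h1).inv_tendsto_atTop
    simpa [Function.comp_def, Pi.inv_def, neg_mul, Real.exp_neg] using this
  have hexp0 : Tendsto (fun t : ℝ => L 0 * Real.exp (-k * t)) atTop (nhds 0) := by
    simpa using h2.const_mul (L 0)
  have hLlim : Tendsto L atTop (nhds 0) := by
    refine tendsto_of_tendsto_of_tendsto_of_le_of_le' tendsto_const_nhds hexp0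
      (Eventually.of_forall hLnn) ?_
    filter_upwards [eventually_ge_atTop (0:ℝ)] with t ht
    exact hg t ht
  have hMlim : Tendsto M atTop (nhds Mstar) := by
    have hsq : Tendsto (fun t => (M t - Mstar) ^ 2) atTop (nhds 0) := by
      refine tendsto_of_tendsto_of_tendsto_of_le_of_le' tendsto_const_nhds hLlim
        (Eventually.of_forall fun t => sq_nonneg _)
        (Eventually.of_forall fun t => ?_)
      rw [hL]; nlinarith [sq_nonneg (C t - Cstar)]
    have habs : Tendsto (fun t => |M t - Mstar|) atTop (nhds 0) := by
      have := (Real.continuous_sqrt.tendsto 0).comp hsq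
      simpa [Function.comp_def, Real.sqrt_sq_eq_abs] using this
    have := (tendsto_zero_iff_abs_tendsto_zero _).mpr habs
    exact tendsto_sub_nhds_zero_iff.mp this
  have hClim : Tendsto C atTop (nhds Cstar) := by
    have hsq : Tendsto (fun t => (C t - Cstar) ^ 2) atTop (nhds 0) := by
      have hL' : Tendsto (fun t => L t / (2 * α)) atTop (nhds 0) := by
        simpa using hLlim.div_const (2 * α)
      refine tendsto_of_tendsto_of_tendsto_of_le_of_le' tendsto_const_nhds hL'
        (Eventually.of_forall fun t => sq_nonneg _)
        (Eventually.of_forall fun t => ?_)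
      rw [hL, le_div_iff₀ (by positivity : (0:ℝ) < 2 * α)]
      nlinarith [sq_nonneg (M t - Mstar)]
    have habs : Tendsto (fun t => |C t - Cstar|) atTop (nhds 0) := by
      have := (Real.continuous_sqrt.tendsto 0).comp hsq
      simpa [Function.comp_def, Real.sqrt_sq_eq_abs] using this
    have := (tendsto_zero_iff_abs_tendsto_zero _).mpr habs
    exact tendsto_sub_nhds_zero_iff.mp this
  exact ⟨fun t ht => by simpa [hk, neg_mul] using hderivL t ht,
    fun t ht => by simpa [hk, neg_mul] using hg t ht, hMlim, hClim⟩
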